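/- For every β, γ ≥ 1, the function N_{β,γ}(r) = r · Ψ_γ'((Ψ_β')^{-1}(r)) is convex on ℝ and superlinear at infinity, i.e. lim_{|r|→∞} N_{β,γ}(r)/|r| = +∞. -/

import Mathlib

open Set Filter

/-- `Ψ_β'(r) = ∫₀^r (1-w²)^(-β) dw`. -/
noncomputable def psiD (β r : ℝ) : ℝ := ∫ w in (0:ℝ)..r, (1 - w ^ 2) ^ (-β)

lemma integrand_contOn (c : ℝ) : ContinuousOn (fun w : ℝ => (1 - w ^ 2) ^ (-c)) (Ioo (-1:ℝ) 1) := by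
  intro w hw
  have h1 : (0:ℝ) < 1 - w ^ 2 := by nlinarith [hw.1, hw.2]
  exact (ContinuousAt.continuousWithinAt (by
    exact (continuousAt_const.sub (continuousAt_pow w 2)).rpow_const (Or.inl h1.ne')))

lemma uIcc_sub (x : ℝ) (hx : x ∈ Ioo (-1:ℝ) 1) : uIcc (0:ℝ) x ⊆ Ioo (-1:ℝ) 1 := by
  intro w hw
  rcases le_total 0 x with h|h
  · rw [uIcc_of_le h] at hw; exact ⟨by linarith [hw.1], lt_of_le_of_lt hw.2 hx.2⟩
  · rw [uIcc_of_ge h] at hw; exact ⟨lt_of_lt_of_le hx.1 hw.1, by linarith [hw.2]⟩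

lemma psiD_intervalIntegrable (c x : ℝ) (hx : x ∈ Ioo (-1:ℝ) 1) :
    IntervalIntegrable (fun w : ℝ => (1 - w ^ 2) ^ (-c)) MeasureTheory.volume 0 x :=
  ((integrand_contOn c).mono (uIcc_sub x hx)).intervalIntegrable

lemma psiD_hasDerivAt (c x : ℝ) (hx : x ∈ Ioo (-1:ℝ) 1) :
    HasDerivAt (psiD c) ((1 - x ^ 2) ^ (-c)) x := by
  have h1 : (0:ℝ) < 1 - x ^ 2 := by nlinarith [hx.1, hx.2]
  have hca : ContinuousAt (fun w : ℝ => (1 - w ^ 2) ^ (-c)) x :=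
    (continuousAt_const.sub (continuousAt_pow x 2)).rpow_const (Or.inl h1.ne')
  exact intervalIntegral.integral_hasDerivAt_right (psiD_intervalIntegrable c x hx)
    ⟨_, isOpen_Ioo.mem_nhds hx, (integrand_contOn c).aestronglyMeasurable measurableSet_Ioo⟩ hca

lemma psiD_zero (c : ℝ) : psiD c 0 = 0 := intervalIntegral.integral_same

lemma psiD_neg (c r : ℝ) : psiD c (-r) = -psiD c r := by
  unfold psiD
  rw [intervalIntegral.integral_symm]
  have := intervalIntegral.integral_comp_neg (a := (0:ℝ)) (b := r)
    (fun w : ℝ => (1 - w ^ 2) ^ (-c))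
  simp only [neg_zero] at this
  rw [← this]
  simp [neg_sq]

lemma psiD_strictMonoOn (c : ℝ) : StrictMonoOn (psiD c) (Ioo (-1:ℝ) 1) := by
  apply strictMonoOn_of_deriv_pos (convex_Ioo _ _)
  · exact fun x hx => ((psiD_hasDerivAt c x hx).continuousAt).continuousWithinAt
  · intro x hx
    rw [interior_Ioo] at hx
    rw [(psiD_hasDerivAt c x hx).deriv]
    have h1 : (0:ℝ) < 1 - x ^ 2 := by nlinarith [hx.1, hx.2]
    exact Real.rpow_pos_of_pos h1 _

lemma psiD_nonneg (c x : ℝ) (hx : x ∈ Ico (0:ℝ) 1) : 0 ≤ psiD c x := by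
  rw [← psiD_zero c]
  rcases eq_or_lt_of_le hx.1 with h|h
  · rw [← h]
  · exact le_of_lt (psiD_strictMonoOn c ⟨by norm_num, by norm_num⟩
      ⟨by linarith [hx.1], hx.2⟩ h)

lemma psiD_le (c x : ℝ) (hc : 0 ≤ c) (hx : x ∈ Ico (0:ℝ) 1) :
    psiD c x ≤ x * (1 - x ^ 2) ^ (-c) := by
  have hx1 : x ∈ Ioo (-1:ℝ) 1 := ⟨by linarith [hx.1], hx.2⟩
  have h1 : (0:ℝ) < 1 - x ^ 2 := by nlinarith [hx.1, hx.2]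
  have : psiD c x ≤ ∫ _ in (0:ℝ)..x, (1 - x ^ 2) ^ (-c) := by
    apply intervalIntegral.integral_mono_on hx.1 (psiD_intervalIntegrable c x hx1)
      intervalIntegrable_const
    intro w hw
    have hw2 : 0 < 1 - w ^ 2 := by nlinarith [hw.1, hw.2, hx.2]
    exact Real.rpow_le_rpow_of_nonpos h1 (by nlinarith [hw.1, hw.2]) (by linarith)
  simpa [mul_comm] using this

/-- Key bound: for `β > 1` and `t ∈ [0,1)`, `(β-1) * (t * psiD β t) * (1-t²)^(β-1) ≤ 1`. -/
lemma key_bound (β t : ℝ) (hβ : 1 < β) (ht : t ∈ Ico (0:ℝ) 1) :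
    (β - 1) * (t * psiD β t) * (1 - t ^ 2) ^ (β - 1) ≤ 1 := by
  set F : ℝ → ℝ := fun t => (1 - t ^ 2) ^ (1 - β) - (β - 1) * (t * psiD β t) with hF
  have hderiv : ∀ x ∈ Ioo (-1:ℝ) 1, HasDerivAt F
      ((β - 1) * (x * (1 - x ^ 2) ^ (-β) - psiD β x)) x := by
    intro x hx
    have h1 : (0:ℝ) < 1 - x ^ 2 := by nlinarith [hx.1, hx.2]
    have hb : HasDerivAt (fun y : ℝ => 1 - y ^ 2) (-(2 * x)) x := by
      simpa using ((hasDerivAt_pow 2 x).const_sub 1)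
    have h2 : HasDerivAt (fun y : ℝ => (1 - y ^ 2) ^ (1 - β))
        ((1 - β) * (1 - x ^ 2) ^ (1 - β - 1) * (-(2 * x))) x :=
      (Real.hasDerivAt_rpow_const (Or.inl h1.ne')).comp (h₂ := fun y => y ^ (1 - β)) x hb
    have h3 : HasDerivAt (fun y : ℝ => y * psiD β y)
        (1 * psiD β x + x * (1 - x ^ 2) ^ (-β)) x :=
      (hasDerivAt_id x).mul (psiD_hasDerivAt β x hx)
    have := h2.sub ((h3.const_mul (β - 1)))
    refine this.congr_deriv ?_
    symm
    rw [show (1 - β - 1 : ℝ) = -β by ring]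
    ring
  have hmono : MonotoneOn F (Ico (0:ℝ) 1) := by
    apply monotoneOn_of_deriv_nonneg (convex_Ico _ _)
    · intro x hx
      exact ((hderiv x ⟨by linarith [hx.1], hx.2⟩).continuousAt).continuousWithinAt
    · intro x hx
      rw [interior_Ico] at hx
      exact ((hderiv x ⟨by linarith [hx.1], hx.2⟩).differentiableAt).differentiableWithinAt
    · intro x hx
      rw [interior_Ico] at hx
      have hx' : x ∈ Ioo (-1:ℝ) 1 := ⟨by linarith [hx.1], hx.2⟩
      rw [(hderiv x hx').deriv]
      have := psiD_le β x (by linarith) ⟨le_of_lt hx.1, hx.2⟩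
      nlinarith
  have hF0 : F 0 = 1 := by simp [hF, psiD_zero]
  have hFt : (1:ℝ) ≤ F t := by
    rw [← hF0]
    exact hmono ⟨le_refl 0, by norm_num⟩ ht ht.1
  -- F t ≤ (1-t²)^(1-β) - (β-1)(t ψ t), so (β-1)(t ψ t) ≤ (1-t²)^(1-β) - 1 ≤ (1-t²)^(1-β)
  have h1 : (0:ℝ) < 1 - t ^ 2 := by nlinarith [ht.1, ht.2]
  have h2 : (β - 1) * (t * psiD β t) ≤ (1 - t ^ 2) ^ (1 - β) - 1 := by
    simp only [hF] at hFt; linarith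
  have h3 : (0:ℝ) < (1 - t ^ 2) ^ (β - 1) := Real.rpow_pos_of_pos h1 _
  calc (β - 1) * (t * psiD β t) * (1 - t ^ 2) ^ (β - 1)
      ≤ ((1 - t ^ 2) ^ (1 - β) - 1) * (1 - t ^ 2) ^ (β - 1) := by
        apply mul_le_mul_of_nonneg_right h2 (le_of_lt h3)
    _ ≤ (1 - t ^ 2) ^ (1 - β) * (1 - t ^ 2) ^ (β - 1) := by nlinarith
    _ = 1 := by
        rw [← Real.rpow_add h1]; norm_num

/-- Lower bound: for `γ ≥ 1`, `x ∈ [0,1)`: `psiD γ x ≥ -(1/2) log (1-x)`. -/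
lemma psiD_lower (γ x : ℝ) (hγ : 1 ≤ γ) (hx : x ∈ Ico (0:ℝ) 1) :
    -(1/2) * Real.log (1 - x) ≤ psiD γ x := by
  have hx1 : x ∈ Ioo (-1:ℝ) 1 := ⟨by linarith [hx.1], hx.2⟩
  have hlog : (∫ w in (0:ℝ)..x, (1/2) * (1 - w)⁻¹) = -(1/2) * Real.log (1 - x) := by
    have hd : ∀ w ∈ uIcc (0:ℝ) x, HasDerivAt (fun y : ℝ => -(1/2) * Real.log (1 - y))
        ((1/2) * (1 - w)⁻¹) w := by
      intro w hw
      rw [uIcc_of_le hx.1] at hw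
      have h1 : (0:ℝ) < 1 - w := by linarith [hw.2, hx.2]
      have hb : HasDerivAt (fun y : ℝ => 1 - y) (-1) w := by
        simpa using ((hasDerivAt_id w).const_sub 1)
      have := ((hb.log h1.ne').const_mul (-(1/2) : ℝ))
      refine this.congr_deriv ?_
      symm
      field_simp
    have hint : IntervalIntegrable (fun w : ℝ => (1/2) * (1 - w)⁻¹) MeasureTheory.volume 0 x := by
      apply ContinuousOn.intervalIntegrable
      intro w hw
      rw [uIcc_of_le hx.1] at hw
      have h1 : (0:ℝ) < 1 - w := by linarith [hw.2, hx.2]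
      exact (continuousAt_const.mul ((continuousAt_const.sub continuousAt_id).inv₀ h1.ne')).continuousWithinAt
    have := intervalIntegral.integral_eq_sub_of_hasDerivAt hd hint
    rw [this]
    simp [Real.log_one]
  rw [← hlog]
  apply intervalIntegral.integral_mono_on hx.1 ?_ (psiD_intervalIntegrable γ x hx1)
  · intro w hw
    have h1 : (0:ℝ) < 1 - w := by linarith [hw.2, hx.2]
    have h2 : (0:ℝ) < 1 - w ^ 2 := by nlinarith [hw.1, hw.2, hx.2]
    have h3 : (1 - w ^ 2) ^ (-(1:ℝ)) ≤ (1 - w ^ 2) ^ (-γ) :=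
      Real.rpow_le_rpow_of_exponent_ge h2 (by nlinarith [hw.1]) (by linarith)
    rw [Real.rpow_neg_one] at h3
    refine le_trans ?_ h3
    rw [show (1 - w^2 : ℝ) = (1-w)*(1+w) by ring]
    rw [mul_inv]
    have h4 : (0:ℝ) < (1+w)⁻¹ := inv_pos.mpr (by linarith [hw.1])
    have h5 : (1/2 : ℝ) ≤ (1+w)⁻¹ := by
      rw [le_inv_comm₀ (by norm_num) (by linarith [hw.1])]
      linarith [hw.2, hx.2]
    calc (1/2 : ℝ) * (1-w)⁻¹ ≤ (1+w)⁻¹ * (1-w)⁻¹ := by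
          apply mul_le_mul_of_nonneg_right h5 (by positivity)
      _ = (1-w)⁻¹ * (1+w)⁻¹ := by ring
  · -- integrability of lhs
    apply ContinuousOn.intervalIntegrable
    intro w hw
    rw [uIcc_of_le hx.1] at hw
    have h1 : (0:ℝ) < 1 - w := by linarith [hw.2, hx.2]
    exact (continuousAt_const.mul ((continuousAt_const.sub continuousAt_id).inv₀ h1.ne')).continuousWithinAt

/-- for β, γ ≥ 1, with `g = (Ψ_β')⁻¹ : ℝ → (-1,1)`, the function
`N_{β,γ}(r) = r · Ψ_γ'(g r)` is convex on ℝ and superlinear at infinity. -/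
theorem stmt3 (β γ : ℝ) (hβ : 1 ≤ β) (hγ : 1 ≤ γ) (g : ℝ → ℝ)
    (hg_mem : ∀ s : ℝ, g s ∈ Ioo (-1:ℝ) 1)
    (hg_right : ∀ s : ℝ, psiD β (g s) = s)
    (hg_left : ∀ r ∈ Ioo (-1:ℝ) 1, g (psiD β r) = r) :
    ConvexOn ℝ Set.univ (fun r : ℝ => r * psiD γ (g r)) ∧
    Tendsto (fun r : ℝ => (r * psiD γ (g r)) / |r|) (cocompact ℝ) atTop := by
  have hpos : ∀ r : ℝ, (0:ℝ) < 1 - (g r) ^ 2 := fun r => by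
    have h := hg_mem r; nlinarith [h.1, h.2]
  have hgsm : StrictMono g := by
    intro s t hst
    by_contra h
    push_neg at h
    have := (psiD_strictMonoOn β).monotoneOn (hg_mem t) (hg_mem s) h
    rw [hg_right, hg_right] at this
    linarith
  have hgodd : ∀ s, g (-s) = - g s := by
    intro s
    have hx := hg_mem s
    have h1 : psiD β (-(g s)) = -s := by rw [psiD_neg, hg_right]
    calc g (-s) = g (psiD β (-(g s))) := by rw [h1]
      _ = -(g s) := hg_left _ ⟨by linarith [hx.2], by linarith [hx.1]⟩
  have hgcont : Continuous g := by
    refine continuous_iff_continuousAt.2 fun a => ?_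
    refine StrictMonoOn.continuousAt_of_image_mem_nhds
      (hgsm.strictMonoOn univ) univ_mem ?_
    have himg : g '' univ = Ioo (-1:ℝ) 1 := by
      rw [image_univ]
      apply Subset.antisymm
      · rintro _ ⟨s, rfl⟩; exact hg_mem s
      · intro r hr; exact ⟨psiD β r, hg_left r hr⟩
    rw [himg]
    exact isOpen_Ioo.mem_nhds (hg_mem a)
  have hgderiv : ∀ s, HasDerivAt g ((1 - (g s) ^ 2) ^ β) s := by
    intro s
    have h1 := hpos s
    have hf := psiD_hasDerivAt β (g s) (hg_mem s)
    have := HasDerivAt.of_local_left_inverse hgcont.continuousAt hf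
      (ne_of_gt (Real.rpow_pos_of_pos h1 _)) (Eventually.of_forall hg_right)
    refine this.congr_deriv ?_
    symm
    rw [Real.rpow_neg h1.le, inv_inv]
  set D : ℝ → ℝ := fun r => psiD γ (g r) + r * (1 - (g r) ^ 2) ^ (β - γ) with hD
  have hNderiv : ∀ r, HasDerivAt (fun r : ℝ => r * psiD γ (g r)) (D r) r := by
    intro r
    have h1 := hpos r
    have hψg : HasDerivAt (fun r : ℝ => psiD γ (g r))
        ((1 - (g r) ^ 2) ^ (-γ) * (1 - (g r) ^ 2) ^ β) r :=
      (psiD_hasDerivAt γ (g r) (hg_mem r)).comp r (hgderiv r)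
    have := (hasDerivAt_id r).mul hψg
    refine this.congr_deriv ?_
    symm
    simp only [hD]
    rw [show β - γ = -γ + β by ring, Real.rpow_add h1]
    simp only [id_eq]
    ring
  have hDderiv : ∀ r, HasDerivAt D
      (2 * (1 - (g r) ^ 2) ^ (β - γ) -
        2 * (β - γ) * (r * g r) * ((1 - (g r) ^ 2) ^ (β - γ) * (1 - (g r) ^ 2) ^ (β - 1))) r := by
    intro r
    have h1 := hpos r
    have hh : HasDerivAt (fun r : ℝ => 1 - (g r) ^ 2)
        (-(2 * g r * (1 - (g r) ^ 2) ^ β)) r := by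
      have := ((hgderiv r).pow 2).const_sub 1
      refine this.congr_deriv ?_
      symm
      push_cast
      ring
    have hp : HasDerivAt (fun r : ℝ => (1 - (g r) ^ 2) ^ (β - γ))
        ((β - γ) * (1 - (g r) ^ 2) ^ (β - γ - 1) * (-(2 * g r * (1 - (g r) ^ 2) ^ β))) r :=
      (Real.hasDerivAt_rpow_const (Or.inl h1.ne')).comp (h₂ := fun y => y ^ (β - γ)) r hh
    have hψg : HasDerivAt (fun r : ℝ => psiD γ (g r))
        ((1 - (g r) ^ 2) ^ (-γ) * (1 - (g r) ^ 2) ^ β) r :=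
      (psiD_hasDerivAt γ (g r) (hg_mem r)).comp r (hgderiv r)
    have := hψg.add ((hasDerivAt_id r).mul hp)
    refine this.congr_deriv ?_
    symm
    have e1 : (1 - g r ^ 2) ^ (-γ) * (1 - g r ^ 2) ^ β = (1 - g r ^ 2) ^ (β - γ) := by
      rw [← Real.rpow_add h1]; congr 1; ring
    have e2 : (1 - g r ^ 2) ^ (β - γ - 1) * (1 - g r ^ 2) ^ β =
        (1 - g r ^ 2) ^ (β - γ) * (1 - g r ^ 2) ^ (β - 1) := by
      rw [← Real.rpow_add h1, ← Real.rpow_add h1]; congr 1; ring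
    simp only [id_eq]
    linear_combination (-1 : ℝ) * e1 + (2 * (β - γ) * r * g r) * e2
  have hkey : ∀ r : ℝ, (β - γ) * (r * g r) * (1 - (g r) ^ 2) ^ (β - 1) ≤ 1 := by
    intro r
    have h1 := hpos r
    have hx := hg_mem r
    have hr : r = psiD β (g r) := (hg_right r).symm
    have habs : r * g r = |g r| * psiD β |g r| := by
      rcases abs_cases (g r) with ⟨h, _⟩ | ⟨h, _⟩
      · rw [h, hg_right r]; ring
      · rw [h, psiD_neg, hg_right r]; ring
    have htmem : |g r| ∈ Ico (0:ℝ) 1 := ⟨abs_nonneg _, abs_lt.2 ⟨hx.1, hx.2⟩⟩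
    have htnn : 0 ≤ |g r| * psiD β |g r| :=
      mul_nonneg (abs_nonneg _) (psiD_nonneg β _ htmem)
    have hA : (0:ℝ) < (1 - (g r) ^ 2) ^ (β - 1) := Real.rpow_pos_of_pos h1 _
    rcases le_or_gt β γ with hle | hlt
    · have : (β - γ) * (r * g r) * (1 - (g r) ^ 2) ^ (β - 1) ≤ 0 := by
        rw [habs]
        apply mul_nonpos_of_nonpos_of_nonneg _ hA.le
        exact mul_nonpos_of_nonpos_of_nonneg (by linarith) htnn
      linarith
    · have hβ1 : 1 < β := lt_of_le_of_lt hγ hlt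
      have hsq : (1 - (g r) ^ 2) = 1 - |g r| ^ 2 := by rw [sq_abs]
      have hkb := key_bound β |g r| hβ1 htmem
      rw [habs, hsq]
      calc (β - γ) * (|g r| * psiD β |g r|) * (1 - |g r| ^ 2) ^ (β - 1)
          ≤ (β - 1) * (|g r| * psiD β |g r|) * (1 - |g r| ^ 2) ^ (β - 1) := by
            apply mul_le_mul_of_nonneg_right _ (by rw [← hsq]; exact hA.le)
            exact mul_le_mul_of_nonneg_right (by linarith) htnn
        _ ≤ 1 := hkb
  have hDmono : Monotone D := by
    apply monotone_of_deriv_nonneg (fun r => (hDderiv r).differentiableAt)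
    intro r
    rw [(hDderiv r).deriv]
    have h1 := hpos r
    have hP : (0:ℝ) < (1 - (g r) ^ 2) ^ (β - γ) := Real.rpow_pos_of_pos h1 _
    nlinarith [hkey r, hP]
  constructor
  · apply Monotone.convexOn_univ_of_deriv (fun r => (hNderiv r).differentiableAt)
    have hde : deriv (fun r : ℝ => r * psiD γ (g r)) = D := funext fun r => (hNderiv r).deriv
    rw [hde]
    exact hDmono
  · have htop : Tendsto (fun r : ℝ => psiD γ (g r)) atTop atTop := by
      rw [tendsto_atTop]
      intro M
      set M' := max M 0 with hM'
      set x₀ : ℝ := 1 - Real.exp (-(2 * M')) with hx₀def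
      have hx₀ : x₀ ∈ Ico (0:ℝ) 1 := by
        constructor
        · have : Real.exp (-(2 * M')) ≤ 1 := Real.exp_le_one_iff.2 (by
            have : 0 ≤ M' := le_max_right _ _
            linarith)
          simp only [hx₀def]; linarith
        · have : 0 < Real.exp (-(2 * M')) := Real.exp_pos _
          simp only [hx₀def]; linarith
      have hψx₀ : M ≤ psiD γ x₀ := by
        have hlb := psiD_lower γ x₀ hγ hx₀
        have : -(1/2) * Real.log (1 - x₀) = M' := by
          simp only [hx₀def, sub_sub_cancel, Real.log_exp]; ring
        have hMM' : M ≤ M' := le_max_left _ _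
        linarith
      have hx₀' : x₀ ∈ Ioo (-1:ℝ) 1 := ⟨by linarith [hx₀.1], hx₀.2⟩
      filter_upwards [eventually_ge_atTop (psiD β x₀)] with r hr
      have hg1 : x₀ ≤ g r := by
        have h2 : g (psiD β x₀) = x₀ := hg_left x₀ hx₀'
        calc x₀ = g (psiD β x₀) := h2.symm
          _ ≤ g r := hgsm.monotone hr
      have := (psiD_strictMonoOn γ).monotoneOn hx₀' (hg_mem r) hg1
      linarith
    have hFtop : Tendsto (fun r : ℝ => r * psiD γ (g r) / |r|) atTop atTop := by
      apply htop.congr'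
      filter_upwards [eventually_gt_atTop (0:ℝ)] with r hr
      rw [abs_of_pos hr]
      field_simp
    have hFbot : Tendsto (fun r : ℝ => r * psiD γ (g r) / |r|) atBot atTop := by
      have h2 : Tendsto ((fun r : ℝ => r * psiD γ (g r) / |r|) ∘ Neg.neg) atBot atTop :=
        hFtop.comp tendsto_neg_atBot_atTop
      have h3 : ((fun r : ℝ => r * psiD γ (g r) / |r|) ∘ Neg.neg) =
          fun r : ℝ => r * psiD γ (g r) / |r| := by
        funext r
        simp only [Function.comp_apply]
        rw [hgodd, psiD_neg, abs_neg]
        ring_nf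
      rwa [h3] at h2
    rw [cocompact_eq_atBot_atTop]
    exact tendsto_sup.2 ⟨hFbot, hFtop⟩
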